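/- Let T : ℂ → ℂ be the ℝ-linear map S(ξ) = i·ξ̄ (conjugation followed by multiplication by i). Then the induced automorphism F_S of the oscillator group Osc₁, defined by F_S(ξ,z,t) = (S(ξ), det(S)·z, sgn(det S)·t) = (iξ̄, -z, -t), satisfies: the pullback F_S* of the representation F_{c,d} is F_{-c,-d}, i.e., under F_S the parameters (c,d) of the generic coadjoint orbit transform to (det(S)·c, sgn(det S)·d) = (-c, -d). -/

import Mathlib

/-- Pullback of the representation `F_{c,d}` of the oscillator group under the
automorphism `F_S` with `S(ξ) = i·ξ̄`.  The differential of `F_S` sends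
`X ↦ Y`, `Y ↦ X`, `Z ↦ -Z`, `T ↦ -T`, and conjugating the derived representation of
`F_{c,d}` (given on an orthonormal basis `ψ` of its Fock space by the usual formulas)
by these assignments yields a representation equivalent to `F_{-c,-d}`:
there is a linear equivalence `U` with `U∘σ(Y) = τ(X)∘U`, `U∘σ(X) = τ(Y)∘U`,
`U∘(-σ(Z)) = τ(Z)∘U`, `U∘(-σ(T)) = τ(T)∘U`, where `τ` is the derived representation
of `F_{-c,-d}` on a basis `ψ'`. -/
theorem pullback_FS_of_F_cd (c d : ℝ) (hc : 0 < c)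
    (V W : Type*) [AddCommGroup V] [Module ℂ V] [AddCommGroup W] [Module ℂ W]
    (ψ : Module.Basis ℕ ℂ V) (ψ' : Module.Basis ℕ ℂ W)
    (Xσ Yσ Zσ Tσ : V →ₗ[ℂ] V) (Xτ Yτ Zτ Tτ : W →ₗ[ℂ] W)
    -- the derived representation of `F_{c,d}` (with `c > 0`) on `V`:
    (hZσ : ∀ n : ℕ, Zσ (ψ n) = (2 * (Real.pi : ℂ) * Complex.I * (c : ℂ)) • ψ n)
    (hTσ : ∀ n : ℕ, Tσ (ψ n) = ((2 * (Real.pi : ℂ) * (d : ℂ) - (n : ℂ)) * Complex.I) • ψ n)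
    (hApσ : ∀ n : ℕ, (Xσ + Complex.I • Yσ) (ψ n)
      = ((2 * Real.sqrt (Real.pi * c * (n + 1)) : ℝ) : ℂ) • ψ (n + 1))
    (hAmσ0 : (Xσ - Complex.I • Yσ) (ψ 0) = 0)
    (hAmσ : ∀ n : ℕ, (Xσ - Complex.I • Yσ) (ψ (n + 1))
      = ((-(2 * Real.sqrt (Real.pi * c * (n + 1))) : ℝ) : ℂ) • ψ n)
    -- the derived representation of `F_{-c,-d}` on `W`:
    (hZτ : ∀ n : ℕ, Zτ (ψ' n) = (-(2 * (Real.pi : ℂ) * Complex.I * (c : ℂ))) • ψ' n)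
    (hTτ : ∀ n : ℕ, Tτ (ψ' n) = ((2 * (Real.pi : ℂ) * (-d : ℂ) + (n : ℂ)) * Complex.I) • ψ' n)
    (hApτ : ∀ n : ℕ, (Xτ - Complex.I • Yτ) (ψ' n)
      = ((2 * Real.sqrt (Real.pi * c * (n + 1)) : ℝ) : ℂ) • ψ' (n + 1))
    (hAmτ0 : (Xτ + Complex.I • Yτ) (ψ' 0) = 0)
    (hAmτ : ∀ n : ℕ, (Xτ + Complex.I • Yτ) (ψ' (n + 1))
      = ((-(2 * Real.sqrt (Real.pi * c * (n + 1))) : ℝ) : ℂ) • ψ' n) :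
    ∃ U : V ≃ₗ[ℂ] W,
      (∀ v : V, U (Yσ v) = Xτ (U v)) ∧
      (∀ v : V, U (Xσ v) = Yτ (U v)) ∧
      (∀ v : V, U (-(Zσ v)) = Zτ (U v)) ∧
      (∀ v : V, U (-(Tσ v)) = Tτ (U v)) := by
  classical
  set f : V →ₗ[ℂ] W := ψ.constr ℂ fun n => (Complex.I ^ n) • ψ' n with hf
  set g : W →ₗ[ℂ] V := ψ'.constr ℂ fun n => ((Complex.I ^ n)⁻¹) • ψ n with hg
  have hfψ : ∀ n, f (ψ n) = (Complex.I ^ n) • ψ' n := fun n => ψ.constr_basis ℂ _ n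
  have hgψ : ∀ n, g (ψ' n) = ((Complex.I ^ n)⁻¹) • ψ n := fun n => ψ'.constr_basis ℂ _ n
  have hIne : ∀ n : ℕ, (Complex.I ^ n) ≠ 0 := fun n => pow_ne_zero _ Complex.I_ne_zero
  have hgf : g.comp f = LinearMap.id := by
    apply ψ.ext; intro n
    simp [hfψ, hgψ, smul_smul, inv_mul_cancel₀ (hIne n)]
  have hfg : f.comp g = LinearMap.id := by
    apply ψ'.ext; intro n
    simp [hfψ, hgψ, smul_smul, inv_mul_cancel₀ (hIne n)]
  set U : V ≃ₗ[ℂ] W := LinearEquiv.ofLinear f g hfg hgf with hU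
  have hUapp : ∀ v, U v = f v := fun v => rfl
  have hplusL : f ∘ₗ (Xσ + Complex.I • Yσ)
      = (Complex.I • (Xτ - Complex.I • Yτ)) ∘ₗ f := by
    apply ψ.ext; intro n
    simp only [LinearMap.comp_apply, hApσ n, map_smul, hfψ, LinearMap.smul_apply]
    rw [hApτ n]
    simp only [smul_smul]
    congr 1
    ring
  have hminusL : f ∘ₗ (Xσ - Complex.I • Yσ)
      = ((-Complex.I) • (Xτ + Complex.I • Yτ)) ∘ₗ f := by
    apply ψ.ext; intro n
    cases n with
    | zero =>
      simp only [LinearMap.comp_apply, hAmσ0, map_zero, LinearMap.smul_apply]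
      rw [hfψ, map_smul, hAmτ0]
      simp
    | succ m =>
      simp only [LinearMap.comp_apply, hAmσ m, map_smul, LinearMap.smul_apply, hfψ]
      rw [hAmτ m]
      simp only [smul_smul]
      congr 1
      rw [pow_succ]
      push_cast
      linear_combination (-(2 * (Real.sqrt (Real.pi * c * (m + 1)) : ℂ)) * Complex.I ^ m) * Complex.I_mul_I
  have hplus : ∀ v : V, f (Xσ v) + Complex.I • f (Yσ v)
      = Complex.I • Xτ (f v) + Yτ (f v) := by
    intro v
    have h := LinearMap.congr_fun hplusL v
    simp only [LinearMap.comp_apply, LinearMap.add_apply, LinearMap.smul_apply,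
      map_add, map_smul, smul_sub, smul_smul, Complex.I_mul_I, neg_smul, one_smul,
      sub_neg_eq_add] at h
    exact h
  have hminus : ∀ v : V, f (Xσ v) - Complex.I • f (Yσ v)
      = -(Complex.I • Xτ (f v)) + Yτ (f v) := by
    intro v
    have h := LinearMap.congr_fun hminusL v
    simp only [LinearMap.comp_apply, LinearMap.sub_apply, LinearMap.smul_apply,
      map_sub, map_smul, smul_add, smul_smul, neg_mul, Complex.I_mul_I, neg_neg,
      neg_smul, one_smul] at h
    exact h
  refine ⟨U, ?_, ?_, ?_, ?_⟩
  · intro v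
    rw [hUapp, hUapp]
    have key : Complex.I • f (Yσ v) = Complex.I • Xτ (f v) := by
      have h1 := hplus v
      have h2 := hminus v
      have h3 := congrArg₂ (· - ·) h1 h2
      have h4 : (2:ℂ) • (Complex.I • f (Yσ v)) = (2:ℂ) • (Complex.I • Xτ (f v)) := by
        rw [two_smul, two_smul]
        calc Complex.I • f (Yσ v) + Complex.I • f (Yσ v)
            = (f (Xσ v) + Complex.I • f (Yσ v)) - (f (Xσ v) - Complex.I • f (Yσ v)) := by abel
          _ = (Complex.I • Xτ (f v) + Yτ (f v)) - (-(Complex.I • Xτ (f v)) + Yτ (f v)) := by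
              rw [h1, h2]
          _ = Complex.I • Xτ (f v) + Complex.I • Xτ (f v) := by abel
      exact smul_right_injective W (by norm_num : (2:ℂ) ≠ 0) h4
    exact smul_right_injective W Complex.I_ne_zero key
  · intro v
    rw [hUapp, hUapp]
    have h1 := hplus v
    have h2 := hminus v
    have h4 : (2:ℂ) • f (Xσ v) = (2:ℂ) • Yτ (f v) := by
      rw [two_smul, two_smul]
      calc f (Xσ v) + f (Xσ v)
          = (f (Xσ v) + Complex.I • f (Yσ v)) + (f (Xσ v) - Complex.I • f (Yσ v)) := by abel
        _ = (Complex.I • Xτ (f v) + Yτ (f v)) + (-(Complex.I • Xτ (f v)) + Yτ (f v)) := by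
            rw [h1, h2]
        _ = Yτ (f v) + Yτ (f v) := by abel
    exact smul_right_injective W (by norm_num : (2:ℂ) ≠ 0) h4
  · intro v
    rw [hUapp, hUapp]
    have hL : f ∘ₗ (-Zσ) = Zτ ∘ₗ f := by
      apply ψ.ext; intro n
      simp only [LinearMap.comp_apply, LinearMap.neg_apply, hZσ n, hfψ, map_smul,
        map_neg]
      rw [hZτ n]
      simp only [smul_smul, neg_smul, ← smul_neg]
      congr 1
      ring
    have h := LinearMap.congr_fun hL v
    simp only [LinearMap.comp_apply, LinearMap.neg_apply, map_neg] at h ⊢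
    exact h
  · intro v
    rw [hUapp, hUapp]
    have hL : f ∘ₗ (-Tσ) = Tτ ∘ₗ f := by
      apply ψ.ext; intro n
      simp only [LinearMap.comp_apply, LinearMap.neg_apply, hTσ n, hfψ, map_smul,
        map_neg]
      rw [hTτ n]
      simp only [smul_smul]
      rw [← neg_smul]
      congr 1
      push_cast
      ring
    have h := LinearMap.congr_fun hL v
    simp only [LinearMap.comp_apply, LinearMap.neg_apply, map_neg] at h ⊢
    exact h
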